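/- Let N = k n = k^t q with k ≥ 2, t ≥ 1, gcd(q,k)=1, n = k^{t-1} q. Define φ(A) = A_0 + ... + A_{t-1} (sum of the t lowest base-k digits of A). Then for every ℓ ∈ {0,...,n-1}, the multiset {φ(ℓ), φ(ℓ+n), ..., φ(ℓ+(k-1)n)} equals the multiset {φ(kℓ), φ(kℓ+1), ..., φ(kℓ+k-1)}. -/

import Mathlib

theorem column_block_weights (N n k t q : ℕ) (hk : 2 ≤ k) (ht : 1 ≤ t) (hq : 1 ≤ q)
    (hco : Nat.Coprime q k) (hN : N = k ^ t * q) (hn : n = k ^ (t - 1) * q)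
    (φ : ℕ → ℕ) (hφ : ∀ A, φ A = ∑ i ∈ Finset.range t, A / k ^ i % k) :
    ∀ ℓ < n,
      (Finset.range k).val.map (fun i => φ (ℓ + i * n)) =
      (Finset.range k).val.map (fun i => φ (k * ℓ + i)) := by
  intro ℓ hℓ
  have hk0 : 0 < k := by omega
  set s := t - 1 with hs
  have hts : t = s + 1 := by omega
  set S := ∑ j ∈ Finset.range s, ℓ / k ^ j % k with hS
  set c := ℓ / k ^ s with hc
  -- value of φ on the left family
  have hL : ∀ i, φ (ℓ + i * n) = S + (c + i * q) % k := by
    intro i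
    rw [hφ, hts, Finset.sum_range_succ]
    congr 1
    · apply Finset.sum_congr rfl
      intro j hj
      have hj' : j < s := Finset.mem_range.mp hj
      have hpow : k ^ s = k ^ (s - j) * k ^ j := by
        rw [← pow_add]; congr 1; omega
      have h1 : ℓ + i * n = ℓ + (i * q * k ^ (s - j)) * k ^ j := by
        rw [hn, hpow]; ring
      have h2 : (ℓ + (i * q * k ^ (s - j)) * k ^ j) / k ^ j
          = ℓ / k ^ j + i * q * k ^ (s - j) := by
        rw [Nat.add_mul_div_right _ _ (pow_pos hk0 j)]
      have hsj : s - j = (s - j - 1) + 1 := by omega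
      rw [h1, h2, hsj, pow_succ, ← mul_assoc, Nat.add_mul_mod_self_right]
    · have h1 : ℓ + i * n = ℓ + (i * q) * k ^ s := by
        rw [hn]; ring
      rw [h1, Nat.add_mul_div_right _ _ (pow_pos hk0 s), ← hc]
  -- value of φ on the right family
  have hR : ∀ i < k, φ (k * ℓ + i) = S + i := by
    intro i hi
    rw [hφ, hts, Finset.sum_range_succ']
    congr 1
    · apply Finset.sum_congr rfl
      intro j hj
      have h1 : k * ℓ + i = i + ℓ * k := by ring
      have h2 : (i + ℓ * k) / k ^ (j + 1) = ℓ / k ^ j := by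
        rw [pow_succ', ← Nat.div_div_eq_div_mul,
          Nat.add_mul_div_right _ _ hk0, Nat.div_eq_of_lt hi, Nat.zero_add]
      rw [h1, h2]
    · have h1 : k * ℓ + i = i + ℓ * k := by ring
      rw [pow_zero, Nat.div_one, h1, Nat.add_mul_mod_self_right,
        Nat.mod_eq_of_lt hi]
  -- rewrite both multisets
  have eL : (Finset.range k).val.map (fun i => φ (ℓ + i * n)) =
      (Finset.range k).val.map ((fun x => S + x) ∘ (fun i => (c + i * q) % k)) := by
    apply Multiset.map_congr rfl
    intro i hi
    exact hL i
  have eR : (Finset.range k).val.map (fun i => φ (k * ℓ + i)) =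
      (Finset.range k).val.map ((fun x => S + x) ∘ id) := by
    apply Multiset.map_congr rfl
    intro i hi
    exact hR i (Finset.mem_range.mp hi)
  rw [eL, eR, ← Multiset.map_map, ← Multiset.map_map]
  congr 1
  -- key permutation fact
  have hinj : Set.InjOn (fun i => (c + i * q) % k) (Finset.range k) := by
    intro a ha b hb hab
    simp only [Finset.coe_range, Set.mem_Iio] at ha hb
    simp only at hab
    have h1 : a * q ≡ b * q [MOD k] := by
      have := Nat.ModEq.add_left_cancel' c hab
      exact this
    have h2 : a ≡ b [MOD k] := h1.cancel_right_of_coprime hco.symm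
    have := h2.eq_of_lt_of_lt ha hb
    exact this
  have himg : (Finset.range k).image (fun i => (c + i * q) % k) = Finset.range k := by
    apply Finset.eq_of_subset_of_card_le
    · intro x hx
      simp only [Finset.mem_image] at hx
      obtain ⟨a, _, rfl⟩ := hx
      exact Finset.mem_range.mpr (Nat.mod_lt _ hk0)
    · rw [Finset.card_image_of_injOn hinj]
  calc (Finset.range k).val.map (fun i => (c + i * q) % k)
      = ((Finset.range k).image (fun i => (c + i * q) % k)).val :=
        (Finset.image_val_of_injOn hinj).symm
    _ = (Finset.range k).val := by rw [himg]
    _ = (Finset.range k).val.map id := by simp
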